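/- arXiv:2503.10955 — 2 statements merged into one kernel-verified Lean document; each statement's English description precedes it below -/
import Mathlib

section
/- In the language Imp, termination equivalence is compositional for sequential composition and while loops: for all program terms p, p', q, q' ∈ P and every expression e ∈ Ex, if ter(p) = ter(p') and ter(q) = ter(q') then ter(p;q) = ter(p';q'), and if ter(p) = ter(p') then ter(while e p) = ter(while e p'). -/
/-! # Statement 3: Compositionality of termination equivalence in Imp -/
namespace ImpLang

/-- Arithmetic expressions over the variable set `ℕ`. -/
inductive Ex : Type
  | const : ℤ → Ex
  | var : ℕ → Ex
  | add : Ex → Ex → Ex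
  | sub : Ex → Ex → Ex
  | mul : Ex → Ex → Ex

/-- Variable stores. -/
abbrev Store := ℕ → ℤ

/-- Expression evaluation. -/
def eev : Ex → Store → ℤ
  | .const n, _ => n
  | .var x, s => s x
  | .add e₁ e₂, s => eev e₁ s + eev e₂ s
  | .sub e₁ e₂, s => eev e₁ s - eev e₂ s
  | .mul e₁ e₂, s => eev e₁ s * eev e₂ s

/-- Store update `s[x := n]`. -/
def upd (s : Store) (x : ℕ) (n : ℤ) : Store := fun y => if y = x then n else s y

/-- Imp program terms. -/
inductive P : Type
  | skip : P
  | assign : ℕ → Ex → P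
  | whileE : Ex → P → P
  | seq : P → P → P

/-- The deterministic small-step operational semantics of Imp:
`step p s = .inl (p', s')` means `p,s → p',s'`, and `step p s = .inr s'` means
`p,s ↓ s'`. -/
def step : P → Store → (P × Store) ⊕ Store
  | .skip, s => .inr s
  | .assign x e, s => .inr (upd s x (eev e s))
  | .whileE e p, s =>
      if eev e s = 0 then .inr s else .inl (.seq p (.whileE e p), s)
  | .seq p q, s =>
      match step p s with
      | .inl (p', s') => .inl (.seq p' q, s')
      | .inr s' => .inl (q, s')

/-- Iterated execution of the small-step semantics: `runF c n` is the configuration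
reached after `n` steps from `c` (a running configuration `.inl (p,s)` or a
terminated one `.inr s'`), and `none` if the execution stopped strictly before. -/
def runF : (P × Store) ⊕ Store → ℕ → Option ((P × Store) ⊕ Store)
  | c, 0 => some c
  | c, n+1 =>
      match runF c n with
      | some (.inl (p, s)) => some (step p s)
      | _ => none

/-- The trace map of Imp, encoding the (nonempty, finite or infinite) sequence
`trc(p)(s) ∈ 𝒮^∞` as a function `ℕ → Option (Store ⊕ Store)`: the `n`-th entry is
`some (.inl sₙ)` for an intermediate store produced by a transition `→`,
`some (.inr s')` for the final store produced by `↓`, and `none` beyond the end of a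
finite trace. Thus a finite trace `(s₁,…,sₙ,s')` is the function sending
`0,…,n-1` to `some (.inl sᵢ₊₁)`, `n` to `some (.inr s')` and everything else to
`none`, and an infinite trace `(s₁,s₂,…)` is the function sending each `n` to
`some (.inl sₙ₊₁)`. -/
def trc (p : P) (s : Store) : ℕ → Option (Store ⊕ Store) := fun n =>
  match runF (.inl (p, s)) (n+1) with
  | some (.inl (_, s')) => some (.inl s')
  | some (.inr s') => some (.inr s')
  | none => none

open Classical in
/-- The cost map of Imp: `cst p s = some (n, s')` iff `trc p s = (s₁,…,sₙ,s')` is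
finite, and `cst p s = none` (the element `*`) iff `trc p s` is infinite. -/
noncomputable def cst (p : P) (s : Store) : Option (ℕ × Store) :=
  if h : ∃ ns : ℕ × Store, trc p s ns.1 = some (.inr ns.2) then some h.choose
  else none

/-- The termination map of Imp: `ter p s = some s'` iff `trc p s` is finite with
last element `s'`, and `ter p s = none` (the element `*`) iff `trc p s` is
infinite. -/
noncomputable def ter (p : P) (s : Store) : Option Store := (cst p s).map Prod.snd

end ImpLang

namespace ImpLang

/-- `p` started in `s` terminates in `s'`. -/
def Trm (p : P) (s s' : Store) : Prop := ∃ n, runF (.inl (p, s)) n = some (.inr s')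

lemma runF_inr (s : Store) : ∀ n, runF (.inr s : (P × Store) ⊕ Store) (n + 1) = none := by
  intro n
  induction n with
  | zero => rfl
  | succ n ih =>
    have hm : runF (Sum.inr s : (P × Store) ⊕ Store) (n + 1 + 1)
        = (match runF (Sum.inr s : (P × Store) ⊕ Store) (n + 1) with
          | some (.inl (p, s)) => some (step p s)
          | _ => none) := rfl
    rw [hm, ih]

lemma runF_add (c : (P × Store) ⊕ Store) (n : ℕ) :
    ∀ m, runF c (n + m) = (runF c n).bind (fun d => runF d m) := by
  intro m
  induction m with
  | zero => cases h : runF c n <;> simp [runF, h]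
  | succ m ih =>
    have hmatch : runF c (n + (m + 1)) = (match runF c (n + m) with
        | some (.inl (p, s)) => some (step p s)
        | _ => none) := rfl
    rw [hmatch, ih]
    cases h : runF c n with
    | none => rfl
    | some d => rfl

lemma runF_inr_le {c : (P × Store) ⊕ Store} {n m : ℕ} {a b : Store} (hle : n ≤ m)
    (ha : runF c n = some (.inr a)) (hb : runF c m = some (.inr b)) : n = m ∧ a = b := by
  obtain ⟨k, rfl⟩ := Nat.exists_eq_add_of_le hle
  rw [runF_add, ha] at hb
  cases k with
  | zero => simp [runF] at hb; exact ⟨rfl, hb⟩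
  | succ k =>
    have : (some (Sum.inr a : (P × Store) ⊕ Store)).bind (fun d => runF d (k + 1)) = none := by
      simp [runF_inr]
    rw [this] at hb
    cases hb

lemma runF_uniq {c : (P × Store) ⊕ Store} {n m : ℕ} {a b : Store}
    (ha : runF c n = some (.inr a)) (hb : runF c m = some (.inr b)) : n = m ∧ a = b := by
  rcases le_total n m with h | h
  · exact runF_inr_le h ha hb
  · obtain ⟨h1, h2⟩ := runF_inr_le h hb ha
    exact ⟨h1.symm, h2.symm⟩

lemma Trm_unique {p : P} {s a b : Store} (ha : Trm p s a) (hb : Trm p s b) : a = b := by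
  obtain ⟨n, hn⟩ := ha
  obtain ⟨m, hm⟩ := hb
  exact (runF_uniq hn hm).2

lemma runF_progress (p : P) (s : Store) (hnt : ∀ s', ¬ Trm p s s') :
    ∀ n, ∃ p₁ s₁, runF (.inl (p, s)) n = some (.inl (p₁, s₁)) := by
  intro n
  induction n with
  | zero => exact ⟨p, s, rfl⟩
  | succ n ih =>
    obtain ⟨p₁, s₁, h⟩ := ih
    have h1 : runF (.inl (p, s)) (n + 1) = some (step p₁ s₁) := by
      simp [runF, h]
    cases hs : step p₁ s₁ with
    | inl ps => exact ⟨ps.1, ps.2, by rw [h1, hs]⟩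
    | inr s' => exact absurd ⟨n + 1, by rw [h1, hs]⟩ (hnt s')

lemma seq_runF_inl (q : P) : ∀ (n : ℕ) (p : P) (s : Store) (p₁ : P) (s₁ : Store),
    runF (.inl (p, s)) n = some (.inl (p₁, s₁)) →
    runF (.inl (P.seq p q, s)) n = some (.inl (P.seq p₁ q, s₁)) := by
  intro n
  induction n with
  | zero =>
    intro p s p₁ s₁ h
    simp only [runF, Option.some.injEq, Sum.inl.injEq, Prod.mk.injEq] at h
    obtain ⟨rfl, rfl⟩ := h
    rfl
  | succ n ih =>
    intro p s p₁ s₁ h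
    cases hn : runF (.inl (p, s)) n with
    | none => simp [runF, hn] at h
    | some d =>
      cases d with
      | inr t => simp [runF, hn] at h
      | inl ps =>
        obtain ⟨p₂, s₂⟩ := ps
        have hstep : step p₂ s₂ = .inl (p₁, s₁) := by
          simp only [runF, hn, Option.some.injEq] at h
          exact h
        have hseq := ih p s p₂ s₂ hn
        have hfin : runF (.inl (P.seq p q, s)) (n + 1) = some (step (P.seq p₂ q) s₂) := by
          simp [runF, hseq]
        rw [hfin]
        simp [step, hstep]

lemma seq_runF_inr (q p : P) (s : Store) (n : ℕ) (s' : Store)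
    (h : runF (.inl (p, s)) (n + 1) = some (.inr s')) :
    runF (.inl (P.seq p q, s)) (n + 1) = some (.inl (q, s')) := by
  cases hn : runF (.inl (p, s)) n with
  | none => simp [runF, hn] at h
  | some d =>
    cases d with
    | inr t => simp [runF, hn] at h
    | inl ps =>
      obtain ⟨p₂, s₂⟩ := ps
      have hstep : step p₂ s₂ = .inr s' := by
        simp only [runF, hn, Option.some.injEq] at h
        exact h
      have hseq := seq_runF_inl q n p s p₂ s₂ hn
      have hfin : runF (.inl (P.seq p q, s)) (n + 1) = some (step (P.seq p₂ q) s₂) := by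
        simp [runF, hseq]
      rw [hfin]
      simp [step, hstep]

lemma seq_split {p q : P} {s s'' : Store} {N : ℕ}
    (hN : runF (.inl (P.seq p q, s)) N = some (.inr s'')) :
    ∃ t k j, N = k + j ∧ runF (.inl (p, s)) k = some (.inr t) ∧
      runF (.inl (q, t)) j = some (.inr s'') := by
  by_cases hp : ∃ t, Trm p s t
  · obtain ⟨t, k, hk⟩ := hp
    cases k with
    | zero => simp [runF] at hk
    | succ k =>
      have hseq := seq_runF_inr q p s k t hk
      rcases le_or_gt (k + 1) N with h | h
      · obtain ⟨j, rfl⟩ := Nat.exists_eq_add_of_le h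
        rw [runF_add, hseq] at hN
        exact ⟨t, k + 1, j, rfl, hk, hN⟩
      · obtain ⟨j, hj⟩ := Nat.exists_eq_add_of_lt h
        have hj' : k + 1 = N + (j + 1) := by omega
        rw [hj'] at hseq
        have hnone : runF (.inl (P.seq p q, s)) (N + (j + 1)) = none := by
          rw [runF_add, hN]
          exact runF_inr s'' j
        rw [hnone] at hseq
        cases hseq
  · push_neg at hp
    obtain ⟨p₁, s₁, h1⟩ := runF_progress p s hp N
    have := seq_runF_inl q N p s p₁ s₁ h1
    rw [hN] at this
    cases this

lemma Trm_seq {p q : P} {s s'' : Store} :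
    Trm (P.seq p q) s s'' ↔ ∃ t, Trm p s t ∧ Trm q t s'' := by
  constructor
  · rintro ⟨N, hN⟩
    obtain ⟨t, k, j, _, hk, hj⟩ := seq_split hN
    exact ⟨t, ⟨k, hk⟩, ⟨j, hj⟩⟩
  · rintro ⟨t, ⟨k, hk⟩, ⟨j, hj⟩⟩
    cases k with
    | zero => simp [runF] at hk
    | succ k =>
      have hseq := seq_runF_inr q p s k t hk
      refine ⟨(k + 1) + j, ?_⟩
      rw [runF_add, hseq]
      exact hj

/-- The terminating behaviour of a while loop, relative to the terminating
behaviour `T` of its body. -/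
inductive WRel (e : Ex) (T : Store → Store → Prop) : Store → Store → Prop
  | done {s : Store} : eev e s = 0 → WRel e T s s
  | loop {s t s' : Store} : eev e s ≠ 0 → T s t → WRel e T t s' → WRel e T s s'

lemma WRel_mono {e : Ex} {T T' : Store → Store → Prop} (h : ∀ a b, T a b → T' a b)
    {s s' : Store} : WRel e T s s' → WRel e T' s s' := by
  intro hw
  induction hw with
  | done h0 => exact .done h0
  | loop hne ht _ ih => exact .loop hne (h _ _ ht) ih

lemma Trm_while_forward (e : Ex) (p : P) :
    ∀ N s s', runF (.inl (P.whileE e p, s)) N = some (.inr s') → WRel e (Trm p) s s' := by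
  intro N
  induction N using Nat.strong_induction_on with
  | _ N ih =>
    intro s s' hN
    by_cases h0 : eev e s = 0
    · have h1 : runF (.inl (P.whileE e p, s)) 1 = some (.inr s) := by
        simp [runF, step, h0]
      obtain ⟨-, rfl⟩ := runF_uniq hN h1
      exact .done h0
    · have h1 : runF (.inl (P.whileE e p, s)) 1
          = some (.inl (P.seq p (P.whileE e p), s)) := by
        simp [runF, step, h0]
      cases N with
      | zero => simp [runF] at hN
      | succ M =>
        have hM : runF (.inl (P.seq p (P.whileE e p), s)) M = some (.inr s') := by
          have h2 : runF (.inl (P.whileE e p, s)) (1 + M)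
              = runF (.inl (P.seq p (P.whileE e p), s)) M := by
            rw [runF_add, h1]
            rfl
          rw [show M + 1 = 1 + M by omega, h2] at hN
          exact hN
        obtain ⟨t, k, j, hkj, hk, hj⟩ := seq_split hM
        cases k with
        | zero => simp [runF] at hk
        | succ k =>
          exact .loop h0 ⟨k + 1, hk⟩ (ih j (by omega) t s' hj)

lemma Trm_while {e : Ex} {p : P} {s s' : Store} :
    Trm (P.whileE e p) s s' ↔ WRel e (Trm p) s s' := by
  constructor
  · rintro ⟨n, hn⟩
    exact Trm_while_forward e p n s s' hn
  · intro h
    induction h with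
    | done h0 => exact ⟨1, by simp [runF, step, h0]⟩
    | @loop s t s' hne ht _ ih =>
      obtain ⟨n, hn⟩ := Trm_seq.mpr ⟨t, ht, ih⟩
      refine ⟨1 + n, ?_⟩
      have h1 : runF (.inl (P.whileE e p, s)) 1
          = some (.inl (P.seq p (P.whileE e p), s)) := by
        simp [runF, step, hne]
      rw [runF_add, h1]
      exact hn

lemma Trm_iff_exists_trc {p : P} {s s' : Store} :
    Trm p s s' ↔ ∃ n, trc p s n = some (.inr s') := by
  constructor
  · rintro ⟨n, hn⟩
    cases n with
    | zero => simp [runF] at hn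
    | succ m =>
      refine ⟨m, ?_⟩
      unfold trc
      rw [hn]
  · rintro ⟨n, hn⟩
    unfold trc at hn
    cases h : runF (.inl (p, s)) (n + 1) with
    | none => rw [h] at hn; simp at hn
    | some d =>
      cases d with
      | inl ps => rw [h] at hn; simp at hn
      | inr t =>
        rw [h] at hn
        simp only [Option.some.injEq, Sum.inr.injEq] at hn
        exact ⟨n + 1, hn ▸ h⟩

lemma ter_eq_some_iff {p : P} {s s' : Store} : ter p s = some s' ↔ Trm p s s' := by
  unfold ter cst
  split_ifs with h
  · have hc := h.choose_spec
    have hch : Trm p s h.choose.2 := Trm_iff_exists_trc.mpr ⟨h.choose.1, hc⟩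
    simp only [Option.map_some, Option.some.injEq]
    constructor
    · rintro rfl
      exact hch
    · intro ht
      exact Trm_unique hch ht
  · simp only [Option.map_none]
    constructor
    · intro h2; cases h2
    · intro ht
      obtain ⟨n, hn⟩ := Trm_iff_exists_trc.mp ht
      exact absurd ⟨(n, s'), hn⟩ h

lemma ter_ext {p p' : P} (h : ∀ s s', Trm p s s' ↔ Trm p' s s') : ter p = ter p' := by
  funext s
  cases h1 : ter p' s with
  | some t =>
    rw [ter_eq_some_iff] at h1 ⊢
    exact (h s t).mpr h1
  | none =>
    cases h2 : ter p s with
    | none => rfl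
    | some t =>
      rw [ter_eq_some_iff] at h2
      have := ter_eq_some_iff.mpr ((h s t).mp h2)
      rw [this] at h1
      cases h1

lemma Trm_congr_of_ter {p p' : P} (h : ter p = ter p') (s s' : Store) :
    Trm p s s' ↔ Trm p' s s' := by
  rw [← ter_eq_some_iff, ← ter_eq_some_iff, h]

/-- termination equivalence is compositional for sequential
composition and while loops. -/
theorem termination_equivalence_compositional :
    (∀ p p' q q' : P,
        ter p = ter p' → ter q = ter q' → ter (.seq p q) = ter (.seq p' q')) ∧
    (∀ (e : Ex) (p p' : P),
        ter p = ter p' → ter (.whileE e p) = ter (.whileE e p')) := by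
  constructor
  · intro p p' q q' hp hq
    apply ter_ext
    intro s s''
    rw [Trm_seq, Trm_seq]
    exact exists_congr fun t =>
      and_congr (Trm_congr_of_ter hp s t) (Trm_congr_of_ter hq t s'')
  · intro e p p' hp
    apply ter_ext
    intro s s'
    rw [Trm_while, Trm_while]
    exact ⟨WRel_mono fun a b => (Trm_congr_of_ter hp a b).mp,
      WRel_mono fun a b => (Trm_congr_of_ter hp a b).mpr⟩

end ImpLang
end

section
/- Let (X, χ) be a deterministic reader–writer transition system over a state set 𝒮 in which there is no infinite chain c₀ → c₁ → c₂ → ⋯ of consecutive silent writer transitions. Then the intersection of termination similarity ≼ter with its converse ≽ter coincides with termination equivalence: for readers, p (≼ter ∩ ≽ter) q iff ter^r(p) = ter^r(q), and for writers, c (≼ter ∩ ≽ter) d iff ter^w(c) = ter^w(d). -/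
/-! # Statement 6: two-way termination similarity = termination equivalence for deterministic reader–writer systems without silent divergence -/
namespace RW

/-- A deterministic reader–writer transition system over a state set `S`:
`rstep p s = c` means `p,s → c`; `wstep c = .inl (d,s)` means `c →ˢ d`;
`wstep c = .inr (.inl d)` means `c → d`; `wstep c = .inr (.inr s)` means `c ↓ s`. -/
structure DRW (S : Type) where
  Rd : Type
  Wr : Type
  rstep : Rd → S → Wr
  wstep : Wr → (Wr × S) ⊕ (Wr ⊕ S)

variable {S : Type}

/-- The output transition `c →ˢ d`. -/
def OutTr (M : DRW S) (c : M.Wr) (s : S) (d : M.Wr) : Prop := M.wstep c = .inl (d, s)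

/-- The silent transition `c → d`. -/
def TauTr (M : DRW S) (c d : M.Wr) : Prop := M.wstep c = .inr (.inl d)

/-- The termination transition `c ↓ s`. -/
def DownTr (M : DRW S) (c : M.Wr) (s : S) : Prop := M.wstep c = .inr (.inr s)

/-- The weak silent transition `c ⇒ d`: a finite chain of silent steps. -/
def WSil (M : DRW S) : M.Wr → M.Wr → Prop := Relation.ReflTransGen (TauTr M)

/-- The weak output transition `c ⇒ˢ d`: `c ⇒ c' →ˢ d` for some `c'`. -/
def WOut (M : DRW S) (c : M.Wr) (s : S) (d : M.Wr) : Prop :=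
  ∃ c', WSil M c c' ∧ OutTr M c' s d

/-- The weak termination transition `c ⇓ s`: `c ⇒ c' ↓ s` for some `c'`. -/
def WDone (M : DRW S) (c : M.Wr) (s : S) : Prop :=
  ∃ c', WSil M c c' ∧ DownTr M c' s

/-- `ReachL M c l d`: from `c` there is a chain of weak output transitions
producing the list `l` of states and ending in `d`. -/
def ReachL (M : DRW S) : M.Wr → List S → M.Wr → Prop
  | c, [], d => c = d
  | c, s :: l, d => ∃ c', WOut M c s c' ∧ ReachL M c' l d

/-- `TrcEntry M c n v` holds iff the `n`-th entry (0-indexed) of the trace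
`trc^w(c)` is `v`, where `v = .inl s` tags an intermediate output state and
`v = .inr s` tags the final state of a finite trace. -/
def TrcEntry (M : DRW S) (c : M.Wr) (n : ℕ) (v : S ⊕ S) : Prop :=
  (∃ l d s d', ReachL M c l d ∧ l.length = n ∧ WOut M d s d' ∧ v = .inl s) ∨
  (∃ l d s, ReachL M c l d ∧ l.length = n ∧ WDone M d s ∧ v = .inr s)

open Classical in
/-- The writer trace map `trc^w : X_w → 𝒮^∞`, with a (nonempty, finite or infinite)
trace encoded as a function `ℕ → Option (S ⊕ S)`: a finite trace `(s₁,…,sₙ,s)`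
sends `0,…,n-1` to `some (.inl sᵢ₊₁)`, `n` to `some (.inr s)` and all larger
numbers to `none`; an infinite trace `(s₁,s₂,…)` sends each `n` to
`some (.inl sₙ₊₁)`. -/
noncomputable def trcW (M : DRW S) (c : M.Wr) : ℕ → Option (S ⊕ S) := fun n =>
  if h : ∃ v, TrcEntry M c n v then some h.choose else none

/-- The reader trace map `trc^r : X_r → (𝒮^∞)^𝒮`: `trc^r(p)(s) = trc^w(c)` where
`p,s → c`. -/
noncomputable def trcR (M : DRW S) (p : M.Rd) (s : S) : ℕ → Option (S ⊕ S) :=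
  trcW M (M.rstep p s)

open Classical in
/-- The writer cost map: `cstW M c = some (n,s)` iff `trc^w(c) = (s₁,…,sₙ,s)` is
finite, and `none` (i.e. `*`) iff `trc^w(c)` is infinite. -/
noncomputable def cstW (M : DRW S) (c : M.Wr) : Option (ℕ × S) :=
  if h : ∃ ns : ℕ × S, trcW M c ns.1 = some (.inr ns.2) then some h.choose else none

/-- The reader cost map. -/
noncomputable def cstR (M : DRW S) (p : M.Rd) (s : S) : Option (ℕ × S) :=
  cstW M (M.rstep p s)

/-- The writer termination map: the last element of a finite trace, `none` (`*`)
for an infinite trace. -/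
noncomputable def terW (M : DRW S) (c : M.Wr) : Option S := (cstW M c).map Prod.snd

/-- The reader termination map. -/
noncomputable def terR (M : DRW S) (p : M.Rd) (s : S) : Option S :=
  (cstR M p s).map Prod.snd

end RW

namespace RW

variable {S : Type}

/-- The weak transition `c ⇒₂ d`: a finite chain of silent or output steps. -/
def WAny (M : DRW S) : M.Wr → M.Wr → Prop :=
  Relation.ReflTransGen (fun c d => TauTr M c d ∨ ∃ s, OutTr M c s d)

/-- The weak termination transition `c ⇓₂ s`: `c ⇒₂ c' ↓ s` for some `c'`. -/
def WDone2 (M : DRW S) (c : M.Wr) (s : S) : Prop :=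
  ∃ c', WAny M c c' ∧ DownTr M c' s

/-- A termination simulation on a deterministic reader–writer transition system. -/
def IsTermSim (M : DRW S) (Rr : M.Rd → M.Rd → Prop) (Rw : M.Wr → M.Wr → Prop) : Prop :=
  (∀ p q s c, Rr p q → M.rstep p s = c → ∃ d, M.rstep q s = d ∧ Rw c d) ∧
  (∀ c d c', Rw c d → ((∃ s, OutTr M c s c') ∨ TauTr M c c') →
      ∃ d', WAny M d d' ∧ Rw c' d') ∧
  (∀ c d s, Rw c d → DownTr M c s → WDone2 M d s)

/-- Two readers are related by termination similarity `≼ter` (the greatest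
termination simulation, i.e. the union of all termination simulations). -/
def TermSimR (M : DRW S) (p q : M.Rd) : Prop :=
  ∃ Rr Rw, IsTermSim M Rr Rw ∧ Rr p q

/-- Two writers are related by termination similarity `≼ter`. -/
def TermSimW (M : DRW S) (c d : M.Wr) : Prop :=
  ∃ Rr Rw, IsTermSim M Rr Rw ∧ Rw c d

section Aux

variable {M : DRW S}

lemma tau_unique {c d d' : M.Wr} (h1 : TauTr M c d) (h2 : TauTr M c d') : d = d' := by
  unfold TauTr at h1 h2; rw [h1] at h2
  simpa using h2

lemma wsil_total {c c1 c2 : M.Wr} (h1 : WSil M c c1) (h2 : WSil M c c2) :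
    WSil M c1 c2 ∨ WSil M c2 c1 := by
  induction h1 using Relation.ReflTransGen.head_induction_on generalizing c2 with
  | refl => exact Or.inl h2
  | head step rest ih =>
    rcases Relation.ReflTransGen.cases_head h2 with rfl | ⟨b, hb, h2'⟩
    · exact Or.inr (Relation.ReflTransGen.head step rest)
    · cases tau_unique step hb; exact ih h2'

lemma wsil_eq_of_out {c d e : M.Wr} {t : S} (h : OutTr M c t d) (hs : WSil M c e) : c = e := by
  rcases Relation.ReflTransGen.cases_head hs with rfl | ⟨b, hb, _⟩
  · rfl
  · unfold OutTr at h; unfold TauTr at hb; rw [h] at hb; simp at hb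

lemma wsil_eq_of_down {c e : M.Wr} {t : S} (h : DownTr M c t) (hs : WSil M c e) : c = e := by
  rcases Relation.ReflTransGen.cases_head hs with rfl | ⟨b, hb, _⟩
  · rfl
  · unfold DownTr at h; unfold TauTr at hb; rw [h] at hb; simp at hb

lemma wout_det {c d e : M.Wr} {s t : S} (h1 : WOut M c s d) (h2 : WOut M c t e) :
    s = t ∧ d = e := by
  obtain ⟨c1, hs1, ho1⟩ := h1
  obtain ⟨c2, hs2, ho2⟩ := h2
  have hc : c1 = c2 := by
    rcases wsil_total hs1 hs2 with h | h
    · exact wsil_eq_of_out ho1 h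
    · exact (wsil_eq_of_out ho2 h).symm
  subst hc
  unfold OutTr at ho1 ho2; rw [ho1] at ho2
  simp only [Sum.inl.injEq, Prod.mk.injEq] at ho2
  exact ⟨ho2.2, ho2.1⟩

lemma wout_wdone_exclusive {c d : M.Wr} {s t : S} (h1 : WOut M c s d) (h2 : WDone M c t) :
    False := by
  obtain ⟨c1, hs1, ho1⟩ := h1
  obtain ⟨c2, hs2, ho2⟩ := h2
  have hc : c1 = c2 := by
    rcases wsil_total hs1 hs2 with h | h
    · exact wsil_eq_of_out ho1 h
    · exact (wsil_eq_of_down ho2 h).symm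
  subst hc
  unfold OutTr at ho1; unfold DownTr at ho2; rw [ho1] at ho2; simp at ho2

lemma wdone_det {c : M.Wr} {s t : S} (h1 : WDone M c s) (h2 : WDone M c t) : s = t := by
  obtain ⟨c1, hs1, ho1⟩ := h1
  obtain ⟨c2, hs2, ho2⟩ := h2
  have hc : c1 = c2 := by
    rcases wsil_total hs1 hs2 with h | h
    · exact wsil_eq_of_down ho1 h
    · exact (wsil_eq_of_down ho2 h).symm
  subst hc
  unfold DownTr at ho1 ho2; rw [ho1] at ho2; simpa using ho2

lemma reachL_det : ∀ {l l' : List S} {c d d' : M.Wr}, ReachL M c l d → ReachL M c l' d' →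
    l.length = l'.length → l = l' ∧ d = d'
  | [], [], c, d, d', h1, h2, _ => by
      cases h1; cases h2; exact ⟨rfl, rfl⟩
  | s :: l, t :: l', c, d, d', h1, h2, hlen => by
      obtain ⟨c1, ho1, hr1⟩ := h1
      obtain ⟨c2, ho2, hr2⟩ := h2
      obtain ⟨hst, hc⟩ := wout_det ho1 ho2
      subst hst; subst hc
      simp only [List.length_cons, Nat.add_right_cancel_iff] at hlen
      obtain ⟨hl, hd⟩ := reachL_det hr1 hr2 hlen
      exact ⟨by rw [hl], hd⟩

lemma reachL_append {l1 l2 : List S} {c d : M.Wr} :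
    ReachL M c (l1 ++ l2) d ↔ ∃ e, ReachL M c l1 e ∧ ReachL M e l2 d := by
  induction l1 generalizing c with
  | nil =>
    simp only [List.nil_append]
    exact ⟨fun h => ⟨c, rfl, h⟩, fun ⟨e, he, h⟩ => by cases he; exact h⟩
  | cons s l1 ih =>
    constructor
    · rintro ⟨c1, ho, hr⟩
      obtain ⟨e, he1, he2⟩ := ih.mp hr
      exact ⟨e, ⟨c1, ho, he1⟩, he2⟩
    · rintro ⟨e, ⟨c1, ho, he1⟩, he2⟩
      exact ⟨c1, ho, ih.mpr ⟨e, he1, he2⟩⟩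

lemma trcEntry_unique {c : M.Wr} {n : ℕ} {v v' : S ⊕ S} (h1 : TrcEntry M c n v)
    (h2 : TrcEntry M c n v') : v = v' := by
  rcases h1 with ⟨l, d, s, d', hr, hn, ho, rfl⟩ | ⟨l, d, s, hr, hn, ho, rfl⟩ <;>
    rcases h2 with ⟨l', e, t, e', hr', hn', ho', rfl⟩ | ⟨l', e, t, hr', hn', ho', rfl⟩
  · obtain ⟨_, hd⟩ := reachL_det hr hr' (by rw [hn, hn']); subst hd
    rw [(wout_det ho ho').1]
  · obtain ⟨_, hd⟩ := reachL_det hr hr' (by rw [hn, hn']); subst hd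
    exact absurd (wout_wdone_exclusive ho ho') not_false
  · obtain ⟨_, hd⟩ := reachL_det hr hr' (by rw [hn, hn']); subst hd
    exact absurd (wout_wdone_exclusive ho' ho) not_false
  · obtain ⟨_, hd⟩ := reachL_det hr hr' (by rw [hn, hn']); subst hd
    rw [wdone_det ho ho']

lemma final_unique_le {c : M.Wr} {n m : ℕ} {s t : S} (hnm : n ≤ m)
    (h1 : TrcEntry M c n (.inr s)) (h2 : TrcEntry M c m (.inr t)) : n = m ∧ s = t := by
  rcases h1 with ⟨_, _, _, _, _, _, _, h⟩ | ⟨l, d, s', hr, hn, ho, hv⟩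
  · simp at h
  rcases h2 with ⟨_, _, _, _, _, _, _, h⟩ | ⟨l', d', t', hr', hn', ho', hv'⟩
  · simp at h
  obtain rfl : s = s' := by simpa using hv
  obtain rfl : t = t' := by simpa using hv'
  rcases eq_or_lt_of_le hnm with rfl | hlt
  · obtain ⟨_, hd⟩ := reachL_det hr hr' (by rw [hn, hn']); subst hd
    exact ⟨rfl, wdone_det ho ho'⟩
  · exfalso
    have hsplit : l' = l'.take n ++ l'.drop n := (List.take_append_drop n l').symm
    rw [hsplit] at hr'
    obtain ⟨e, he1, he2⟩ := reachL_append.mp hr'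
    have hlen : (l'.take n).length = l.length := by
      rw [List.length_take, hn', hn]; exact min_eq_left (le_of_lt hlt)
    obtain ⟨_, hd⟩ := reachL_det he1 hr hlen; subst hd
    have hdrop : (l'.drop n).length = m - n := by rw [List.length_drop, hn']
    rcases hdd : l'.drop n with _ | ⟨u, rest⟩
    · rw [hdd, List.length_nil] at hdrop
      omega
    · rw [hdd] at he2
      obtain ⟨c1, hou, _⟩ := he2
      exact wout_wdone_exclusive hou ho

lemma final_unique {c : M.Wr} {n m : ℕ} {s t : S} (h1 : TrcEntry M c n (.inr s))
    (h2 : TrcEntry M c m (.inr t)) : n = m ∧ s = t := by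
  rcases le_total n m with h | h
  · exact final_unique_le h h1 h2
  · obtain ⟨h1', h2'⟩ := final_unique_le h h2 h1
    exact ⟨h1'.symm, h2'.symm⟩

lemma trcW_eq_some_iff {c : M.Wr} {n : ℕ} {v : S ⊕ S} :
    trcW M c n = some v ↔ TrcEntry M c n v := by
  unfold trcW
  split
  · next h =>
    constructor
    · intro hv
      have := h.choose_spec
      rwa [Option.some_inj.mp hv] at this
    · intro hv
      exact congrArg some (trcEntry_unique h.choose_spec hv)
  · next h =>
    constructor
    · intro hv; simp at hv
    · intro hv; exact absurd ⟨v, hv⟩ h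

lemma terW_eq_some_iff {c : M.Wr} {s : S} :
    terW M c = some s ↔ ∃ n, TrcEntry M c n (.inr s) := by
  unfold terW cstW
  split
  · next h =>
    have hspec := h.choose_spec
    rw [trcW_eq_some_iff] at hspec
    simp only [Option.map_some]
    constructor
    · intro hs
      exact ⟨h.choose.1, by rwa [Option.some_inj.mp hs] at hspec⟩
    · rintro ⟨n, hn⟩
      rw [(final_unique hspec hn).2]
  · next h =>
    simp only [Option.map_none]
    constructor
    · intro hh; cases hh
    · rintro ⟨n, hn⟩
      exact absurd ⟨(n, s), trcW_eq_some_iff.mpr hn⟩ h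

lemma option_ext {o1 o2 : Option S} (h : ∀ s, o1 = some s ↔ o2 = some s) : o1 = o2 := by
  cases o1 with
  | none =>
    cases o2 with
    | none => rfl
    | some t => exact ((h t).mpr rfl).symm ▸ rfl
  | some t => exact ((h t).mp rfl).symm

lemma wout_tau {c c' d : M.Wr} {s : S} (htau : TauTr M c c') :
    WOut M c s d ↔ WOut M c' s d := by
  constructor
  · rintro ⟨c0, hsil, ho⟩
    rcases Relation.ReflTransGen.cases_head hsil with rfl | ⟨b, hb, hsil'⟩
    · unfold OutTr at ho; unfold TauTr at htau; rw [ho] at htau; simp at htau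
    · cases tau_unique htau hb; exact ⟨c0, hsil', ho⟩
  · rintro ⟨c0, hsil, ho⟩
    exact ⟨c0, Relation.ReflTransGen.head htau hsil, ho⟩

lemma wdone_tau {c c' : M.Wr} {s : S} (htau : TauTr M c c') :
    WDone M c s ↔ WDone M c' s := by
  constructor
  · rintro ⟨c0, hsil, ho⟩
    rcases Relation.ReflTransGen.cases_head hsil with rfl | ⟨b, hb, hsil'⟩
    · unfold DownTr at ho; unfold TauTr at htau; rw [ho] at htau; simp at htau
    · cases tau_unique htau hb; exact ⟨c0, hsil', ho⟩
  · rintro ⟨c0, hsil, ho⟩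
    exact ⟨c0, Relation.ReflTransGen.head htau hsil, ho⟩

lemma reachL_tau {c c' d : M.Wr} {s : S} {l : List S} (htau : TauTr M c c') :
    ReachL M c (s :: l) d ↔ ReachL M c' (s :: l) d := by
  constructor
  · rintro ⟨c0, ho, hr⟩; exact ⟨c0, (wout_tau htau).mp ho, hr⟩
  · rintro ⟨c0, ho, hr⟩; exact ⟨c0, (wout_tau htau).mpr ho, hr⟩

lemma trcEntry_tau {c c' : M.Wr} {n : ℕ} {v : S ⊕ S} (htau : TauTr M c c') :
    TrcEntry M c n v ↔ TrcEntry M c' n v := by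
  constructor
  · rintro (⟨l, d, s, d', hr, hn, ho, rfl⟩ | ⟨l, d, s, hr, hn, ho, rfl⟩)
    · rcases l with _ | ⟨t, l⟩
      · cases hr
        exact Or.inl ⟨[], c', s, d', rfl, hn, (wout_tau htau).mp ho, rfl⟩
      · exact Or.inl ⟨t :: l, d, s, d', (reachL_tau htau).mp hr, hn, ho, rfl⟩
    · rcases l with _ | ⟨t, l⟩
      · cases hr
        exact Or.inr ⟨[], c', s, rfl, hn, (wdone_tau htau).mp ho, rfl⟩
      · exact Or.inr ⟨t :: l, d, s, (reachL_tau htau).mp hr, hn, ho, rfl⟩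
  · rintro (⟨l, d, s, d', hr, hn, ho, rfl⟩ | ⟨l, d, s, hr, hn, ho, rfl⟩)
    · rcases l with _ | ⟨t, l⟩
      · cases hr
        exact Or.inl ⟨[], c, s, d', rfl, hn, (wout_tau htau).mpr ho, rfl⟩
      · exact Or.inl ⟨t :: l, d, s, d', (reachL_tau htau).mpr hr, hn, ho, rfl⟩
    · rcases l with _ | ⟨t, l⟩
      · cases hr
        exact Or.inr ⟨[], c, s, rfl, hn, (wdone_tau htau).mpr ho, rfl⟩
      · exact Or.inr ⟨t :: l, d, s, (reachL_tau htau).mpr hr, hn, ho, rfl⟩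

lemma terW_tau {c c' : M.Wr} (htau : TauTr M c c') : terW M c = terW M c' := by
  apply option_ext
  intro s
  rw [terW_eq_some_iff, terW_eq_some_iff]
  exact exists_congr fun n => ⟨fun h => (trcEntry_tau htau).mp h, fun h => (trcEntry_tau htau).mpr h⟩

lemma wout_of_out {c c' : M.Wr} {t : S} (hout : OutTr M c t c') : WOut M c t c' :=
  ⟨c, Relation.ReflTransGen.refl, hout⟩

lemma wout_out_char {c c' d : M.Wr} {t s : S} (hout : OutTr M c t c') (h : WOut M c s d) :
    s = t ∧ d = c' := wout_det h (wout_of_out hout)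

lemma trcEntry_out {c c' : M.Wr} {t : S} {n : ℕ} {v : S ⊕ S} (hout : OutTr M c t c') :
    TrcEntry M c (n + 1) v ↔ TrcEntry M c' n v := by
  constructor
  · rintro (⟨l, d, s, d', hr, hn, ho, rfl⟩ | ⟨l, d, s, hr, hn, ho, rfl⟩)
    · rcases l with _ | ⟨u, l⟩
      · simp at hn
      · obtain ⟨c0, hwo, hr'⟩ := hr
        obtain ⟨rfl, rfl⟩ := wout_out_char hout hwo
        exact Or.inl ⟨l, d, s, d', hr', by simpa using hn, ho, rfl⟩
    · rcases l with _ | ⟨u, l⟩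
      · simp at hn
      · obtain ⟨c0, hwo, hr'⟩ := hr
        obtain ⟨rfl, rfl⟩ := wout_out_char hout hwo
        exact Or.inr ⟨l, d, s, hr', by simpa using hn, ho, rfl⟩
  · rintro (⟨l, d, s, d', hr, hn, ho, rfl⟩ | ⟨l, d, s, hr, hn, ho, rfl⟩)
    · exact Or.inl ⟨t :: l, d, s, d', ⟨c', wout_of_out hout, hr⟩, by simp [hn], ho, rfl⟩
    · exact Or.inr ⟨t :: l, d, s, ⟨c', wout_of_out hout, hr⟩, by simp [hn], ho, rfl⟩

lemma terW_out {c c' : M.Wr} {t : S} (hout : OutTr M c t c') : terW M c = terW M c' := by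
  apply option_ext
  intro s
  rw [terW_eq_some_iff, terW_eq_some_iff]
  constructor
  · rintro ⟨n, hn⟩
    rcases n with _ | n
    · exfalso
      rcases hn with ⟨l, d, s', d', hr, hln, ho, h⟩ | ⟨l, d, s', hr, hln, ho, h⟩
      · simp at h
      · rcases l with _ | ⟨u, l⟩
        · cases hr
          exact wout_wdone_exclusive (wout_of_out hout) ho
        · simp at hln
    · exact ⟨n, (trcEntry_out hout).mp hn⟩
  · rintro ⟨n, hn⟩
    exact ⟨n + 1, (trcEntry_out hout).mpr hn⟩

lemma terW_down {c : M.Wr} {s : S} (h : DownTr M c s) : terW M c = some s :=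
  terW_eq_some_iff.mpr
    ⟨0, Or.inr ⟨[], c, s, rfl, rfl, ⟨c, Relation.ReflTransGen.refl, h⟩, rfl⟩⟩

lemma wsil_wany {c d : M.Wr} (h : WSil M c d) : WAny M c d :=
  by
    unfold WSil at h
    induction h with
    | refl => exact Relation.ReflTransGen.refl
    | tail _ hs ih => exact Relation.ReflTransGen.tail ih (Or.inl hs)

lemma wout_wany {c d : M.Wr} {s : S} (h : WOut M c s d) : WAny M c d := by
  obtain ⟨c0, hsil, ho⟩ := h
  exact Relation.ReflTransGen.tail (wsil_wany hsil) (Or.inr ⟨s, ho⟩)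

lemma reachL_wany : ∀ {l : List S} {c d : M.Wr}, ReachL M c l d → WAny M c d
  | [], c, d, h => by cases h; exact Relation.ReflTransGen.refl
  | s :: l, c, d, h => by
      obtain ⟨c0, ho, hr⟩ := h
      exact Relation.ReflTransGen.trans (wout_wany ho) (reachL_wany hr)

lemma terW_some_of_wdone2 {c : M.Wr} {s : S} (h : WDone2 M c s) : terW M c = some s := by
  obtain ⟨c', hany, hdown⟩ := h
  induction hany using Relation.ReflTransGen.head_induction_on with
  | refl => exact terW_down hdown
  | head step _ ih =>
    rcases step with htau | ⟨t, hout⟩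
    · rw [terW_tau htau]; exact ih
    · rw [terW_out hout]; exact ih

lemma wdone2_of_terW_some {c : M.Wr} {s : S} (h : terW M c = some s) : WDone2 M c s := by
  rw [terW_eq_some_iff] at h
  obtain ⟨n, hn⟩ := h
  rcases hn with ⟨_, _, _, _, _, _, _, hv⟩ | ⟨l, d, s', hr, _, ⟨d0, hsil, hdown⟩, hv⟩
  · simp at hv
  · obtain rfl : s = s' := by simpa using hv
    exact ⟨d0, Relation.ReflTransGen.trans (reachL_wany hr) (wsil_wany hsil), hdown⟩

lemma sim_wany {Rr : M.Rd → M.Rd → Prop} {Rw : M.Wr → M.Wr → Prop}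
    (hsim : IsTermSim M Rr Rw) {c c' : M.Wr} (h : WAny M c c') :
    ∀ d, Rw c d → ∃ d', WAny M d d' ∧ Rw c' d' := by
  induction h using Relation.ReflTransGen.head_induction_on with
  | refl => exact fun d hd => ⟨d, Relation.ReflTransGen.refl, hd⟩
  | head step _ ih =>
    intro d hd
    obtain ⟨d1, hany1, hRw1⟩ := hsim.2.1 _ d _ hd (step.symm.imp id (fun h => h))
    obtain ⟨d', hany', hRw'⟩ := ih d1 hRw1
    exact ⟨d', Relation.ReflTransGen.trans hany1 hany', hRw'⟩

lemma sim_ter {Rr : M.Rd → M.Rd → Prop} {Rw : M.Wr → M.Wr → Prop}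
    (hsim : IsTermSim M Rr Rw) {c d : M.Wr} (h : Rw c d) {s : S}
    (hs : terW M c = some s) : terW M d = some s := by
  obtain ⟨c', hany, hdown⟩ := wdone2_of_terW_some hs
  obtain ⟨d', hany', hRw'⟩ := sim_wany hsim hany d h
  obtain ⟨d'', hany'', hdown''⟩ := hsim.2.2 _ _ _ hRw' hdown
  exact terW_some_of_wdone2 ⟨d'', Relation.ReflTransGen.trans hany' hany'', hdown''⟩

lemma termSimW_ter {c d : M.Wr} (h : TermSimW M c d) {s : S}
    (hs : terW M c = some s) : terW M d = some s := by
  obtain ⟨Rr, Rw, hsim, hRw⟩ := h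
  exact sim_ter hsim hRw hs

/-- Termination equivalence is a termination simulation. -/
lemma terEquiv_isTermSim :
    IsTermSim M (fun p q => terR M p = terR M q) (fun c d => terW M c = terW M d) := by
  refine ⟨?_, ?_, ?_⟩
  · intro p q s c hpq hc
    refine ⟨M.rstep q s, rfl, ?_⟩
    subst hc
    have : terR M p s = terR M q s := by rw [hpq]
    exact this
  · intro c d c' hcd hstep
    refine ⟨d, Relation.ReflTransGen.refl, ?_⟩
    rcases hstep with ⟨s, hout⟩ | htau
    · rw [← terW_out hout]; exact hcd
    · rw [← terW_tau htau]; exact hcd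
  · intro c d s hcd hdown
    exact wdone2_of_terW_some (hcd ▸ terW_down hdown)

end Aux

/-- in a deterministic reader–writer transition system with no
infinite chain of consecutive silent writer transitions, the intersection of
termination similarity with its converse coincides with termination equivalence,
both on readers and on writers. -/
theorem two_way_termination_similarity_eq_termination_equivalence (M : DRW S)
    (nodiv : ¬ ∃ f : ℕ → M.Wr, ∀ n, TauTr M (f n) (f (n + 1))) :
    (∀ p q : M.Rd, (TermSimR M p q ∧ TermSimR M q p) ↔ terR M p = terR M q) ∧
    (∀ c d : M.Wr, (TermSimW M c d ∧ TermSimW M d c) ↔ terW M c = terW M d) := by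
  constructor
  · intro p q
    constructor
    · rintro ⟨⟨Rr1, Rw1, hsim1, h1⟩, ⟨Rr2, Rw2, hsim2, h2⟩⟩
      funext s
      obtain ⟨d1, hd1, hRw1⟩ := hsim1.1 p q s (M.rstep p s) h1 rfl
      obtain ⟨d2, hd2, hRw2⟩ := hsim2.1 q p s (M.rstep q s) h2 rfl
      subst hd1; subst hd2
      show terW M (M.rstep p s) = terW M (M.rstep q s)
      apply option_ext
      intro t
      exact ⟨fun h => sim_ter hsim1 hRw1 h, fun h => sim_ter hsim2 hRw2 h⟩
    · intro h
      exact ⟨⟨_, _, terEquiv_isTermSim, h⟩, ⟨_, _, terEquiv_isTermSim, h.symm⟩⟩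
  · intro c d
    constructor
    · rintro ⟨h1, h2⟩
      apply option_ext
      intro t
      exact ⟨fun h => termSimW_ter h1 h, fun h => termSimW_ter h2 h⟩
    · intro h
      exact ⟨⟨_, _, terEquiv_isTermSim, h⟩, ⟨_, _, terEquiv_isTermSim, h.symm⟩⟩

end RW
end
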